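/- Let n ≥ 1 and let α be a partial permutation of {1,...,n} with domain of size n-1 whose gap d(α) of the domain and gap i(α) of the image have the same parity, where α is orientation-preserving and n is even. Then the completion of α is an even permutation. Conversely, for n even and α orientation-preserving of rank n-1, if the completion of α is even then d(α) and i(α) have the same parity. -/

import Mathlib

section OpAux

open Equiv Fin

private lemma auxLeApply {m : ℕ} {f : Fin m → Fin m} (hf : StrictMono f) :
    ∀ (N : ℕ) (h : N < m), N ≤ (f ⟨N, h⟩ : ℕ) := by
  intro N
  induction N with
  | zero => intro h; exact Nat.zero_le _
  | succ N ih =>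
    intro h
    have h' : N < m := Nat.lt_of_succ_lt h
    have h2 : (f ⟨N, h'⟩ : ℕ) < (f ⟨N + 1, h⟩ : ℕ) := hf (by simp [Fin.lt_def])
    have h3 := ih h'
    omega

private lemma strictMonoFinId {m : ℕ} {f : Fin m → Fin m} (hf : StrictMono f) (t : Fin m) :
    f t = t := by
  have hsurj : Function.Surjective f := Finite.surjective_of_injective hf.injective
  obtain ⟨g, hg⟩ : ∃ g : Fin m → Fin m, ∀ x, f (g x) = x :=
    ⟨fun x => (hsurj x).choose, fun x => (hsurj x).choose_spec⟩
  have hgmono : StrictMono g := by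
    intro a b hab
    rcases lt_trichotomy (g a) (g b) with h | h | h
    · exact h
    · exact absurd (by rw [← hg a, ← hg b, h]) hab.ne
    · exact absurd (by rw [← hg a, ← hg b]; exact hf h) hab.asymm
  have h1 : ∀ x : Fin m, (x : ℕ) ≤ (f x : ℕ) := fun x => by
    simpa using auxLeApply hf x.val x.isLt
  have h2 : ∀ x : Fin m, (x : ℕ) ≤ (g x : ℕ) := fun x => by
    simpa using auxLeApply hgmono x.val x.isLt
  have h3 : (f t : ℕ) ≤ t := by
    have := hf.monotone (Fin.le_def.mpr (h2 t))
    rw [hg t] at this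
    exact Fin.le_def.mp this
  exact Fin.ext (le_antisymm h3 (h1 t))

private lemma rotationAux {m' : ℕ} {β : Fin (m' + 1) → Fin (m' + 1)}
    (hinj : Function.Injective β) (j0 : Fin (m' + 1))
    (hall : ∀ j : Fin (m' + 1), β (j + 1) < β j → j = j0) :
    ∀ t : Fin (m' + 1), β (j0 + 1 + t) = t := by
  have hsm : StrictMono (fun t : Fin (m' + 1) => β (j0 + 1 + t)) := by
    rw [Fin.strictMono_iff_lt_succ]
    intro u
    have hm'pos : 0 < m' := by
      rcases Nat.eq_zero_or_pos m' with h | h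
      · exact absurd (h ▸ u).isLt (by omega)
      · exact h
    have h1 : (castSucc u) + 1 = u.succ := Fin.coeSucc_eq_succ
    set j : Fin (m' + 1) := j0 + 1 + castSucc u with hj
    have hj1 : j + 1 = j0 + 1 + u.succ := by rw [hj, add_assoc, h1]
    have hjne : j ≠ j0 := by
      intro h
      have h2 : (1 : Fin (m' + 1)) + castSucc u = 0 := by
        have : j0 + (1 + castSucc u) = j0 + 0 := by rw [← add_assoc, ← hj, h, add_zero]
        exact add_left_cancel this
      have hv := congrArg Fin.val h2
      rw [Fin.val_add, Fin.val_one', Fin.val_zero] at hv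
      have h3 : (1 % (m' + 1) + (castSucc u).val) = 1 + u.val := by
        rw [Nat.mod_eq_of_lt (by omega), Fin.coe_castSucc]
      rw [h3, Nat.mod_eq_of_lt (by omega)] at hv
      omega
    have hnd : ¬ β (j + 1) < β j := fun h => hjne (hall j h)
    have hne2 : β j ≠ β (j + 1) := by
      intro h
      have := hinj h
      have h2 : (0 : Fin (m' + 1)) = 1 := by
        have : j + 0 = j + 1 := by rw [add_zero]; exact this
        exact add_left_cancel this
      have hv := congrArg Fin.val h2
      rw [Fin.val_zero, Fin.val_one'] at hv
      rw [Nat.mod_eq_of_lt (by omega)] at hv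
      omega
    have : β j < β (j + 1) := lt_of_le_of_ne (le_of_not_gt hnd) hne2
    rwa [hj1] at this
  intro t
  exact strictMonoFinId hsm t

/-- The permutation of `Fin (N+1)` sending `castSucc j ↦ p.succAbove j` and `last N ↦ p`. -/
private def fperm {N : ℕ} (p : Fin (N + 1)) : Equiv.Perm (Fin (N + 1)) :=
  Fin.revPerm * (p.rev.cycleRange)⁻¹ * Fin.revPerm

private lemma fperm_castSucc {N : ℕ} (p : Fin (N + 1)) (j : Fin N) :
    fperm p (castSucc j) = p.succAbove j := by
  have key : p.rev.cycleRange ((p.succAbove j).rev) = (castSucc j).rev := by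
    rcases lt_or_ge (castSucc j) p with h | h
    · rw [Fin.succAbove_of_castSucc_lt _ _ h]
      exact Fin.cycleRange_of_gt (Fin.rev_lt_rev.mpr h)
    · rw [Fin.succAbove_of_le_castSucc _ _ h]
      have hlt : (succ j).rev < p.rev :=
        Fin.rev_lt_rev.mpr (lt_of_le_of_lt h (Fin.castSucc_lt_succ (i := j)))
      rw [Fin.cycleRange_of_lt hlt, Fin.rev_succ, Fin.rev_castSucc, Fin.coeSucc_eq_succ]
  have h2 : (p.rev.cycleRange)⁻¹ ((castSucc j).rev) = (p.succAbove j).rev := by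
    rw [← key, Equiv.Perm.inv_def, Equiv.symm_apply_apply]
  show Fin.revPerm ((p.rev.cycleRange)⁻¹ (Fin.revPerm (castSucc j))) = p.succAbove j
  simp only [Fin.revPerm_apply]
  rw [h2, Fin.rev_rev]

private lemma fperm_last {N : ℕ} (p : Fin (N + 1)) : fperm p (Fin.last N) = p := by
  show Fin.revPerm ((p.rev.cycleRange)⁻¹ (Fin.revPerm (Fin.last N))) = p
  have h2 : (p.rev.cycleRange)⁻¹ 0 = p.rev := by
    rw [← Fin.cycleRange_self p.rev, Equiv.Perm.inv_def, Equiv.symm_apply_apply]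
  simp only [Fin.revPerm_apply]
  rw [Fin.rev_last, h2, Fin.rev_rev]

private lemma sign_fperm {N : ℕ} (p : Fin (N + 1)) :
    Equiv.Perm.sign (fperm p) = (-1) ^ ((p.rev : ℕ)) := by
  have hrr : (Fin.revPerm : Equiv.Perm (Fin (N + 1))) * Fin.revPerm = 1 := by
    ext x
    simp [Equiv.Perm.mul_apply, Fin.rev_rev]
  have hu : Equiv.Perm.sign (Fin.revPerm : Equiv.Perm (Fin (N + 1))) *
      Equiv.Perm.sign (Fin.revPerm : Equiv.Perm (Fin (N + 1))) = 1 := by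
    rw [← map_mul, hrr, map_one]
  unfold fperm
  rw [map_mul, map_mul, Equiv.Perm.sign_inv, Fin.sign_cycleRange]
  rw [mul_comm (Equiv.Perm.sign (Fin.revPerm : Equiv.Perm (Fin (N + 1)))) ((-1) ^ ((p.rev : ℕ))),
    mul_assoc, hu, mul_one]

private lemma cyc_castSucc {m' : ℕ} (j : Fin (m' + 1)) :
    (castSucc (Fin.last m')).cycleRange (castSucc j) = castSucc (j + 1) := by
  rcases lt_or_eq_of_le (Fin.le_last j) with h | h
  · have hlt : castSucc j < castSucc (Fin.last m') := by
      rw [Fin.castSucc_lt_castSucc_iff]; exact h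
    rw [Fin.cycleRange_of_lt hlt]
    apply Fin.ext
    rw [Fin.val_add_one_of_lt (Fin.castSucc_lt_last j), Fin.coe_castSucc, Fin.coe_castSucc,
      Fin.val_add_one_of_lt h]
  · subst h
    rw [Fin.cycleRange_self]
    rw [Fin.last_add_one, Fin.castSucc_zero]

private lemma cyc_last {m' : ℕ} :
    (castSucc (Fin.last m')).cycleRange (Fin.last (m' + 1)) = Fin.last (m' + 1) :=
  Fin.cycleRange_of_gt (Fin.castSucc_lt_last _)

open Fin.NatCast in
private lemma cyc_pow_castSucc {m' : ℕ} (K : ℕ) (j : Fin (m' + 1)) :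
    ((castSucc (Fin.last m')).cycleRange ^ K) (castSucc j) =
      castSucc (j + (K : Fin (m' + 1))) := by
  induction K generalizing j with
  | zero => simp
  | succ K ih =>
    rw [pow_succ, Equiv.Perm.mul_apply, cyc_castSucc, ih, Nat.cast_add_one]
    congr 1
    abel

private lemma cyc_pow_last {m' : ℕ} (K : ℕ) :
    ((castSucc (Fin.last m')).cycleRange ^ K) (Fin.last (m' + 1)) = Fin.last (m' + 1) := by
  induction K with
  | zero => simp
  | succ K ih => rw [pow_succ, Equiv.Perm.mul_apply, cyc_last, ih]

end OpAux

/-- α is orientation-preserving: among the cyclically adjacent pairs of elements of the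
domain of α there is at most one descent. -/
def IsOrientationPreserving {n : ℕ} (α : Fin n → Option (Fin n)) : Prop :=
  Nat.card {p : Fin n × Fin n //
    (α p.1).isSome ∧ (α p.2).isSome ∧
    ((p.1 < p.2 ∧ ∀ c : Fin n, (α c).isSome → (c ≤ p.1 ∨ p.2 ≤ c)) ∨
     (p.2 ≤ p.1 ∧ ∀ c : Fin n, (α c).isSome → (p.2 ≤ c ∧ c ≤ p.1))) ∧
    ∃ x y : Fin n, α p.1 = some x ∧ α p.2 = some y ∧ y < x} ≤ 1

/-- For n even and α an orientation-preserving partial permutation of rank n-1 with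
domain gap d and image gap i, the completion of α is even iff d and i have the same
parity. -/
theorem op_completion_even_iff_gaps_same_parity (n : ℕ) (hne : Even n)
    (α : Fin n → Option (Fin n))
    (hα : ∀ a b c : Fin n, α a = some c → α b = some c → a = b)
    (hOP : IsOrientationPreserving α)
    (hdom : Nat.card {a : Fin n // (α a).isSome} + 1 = n)
    (d i : Fin n)
    (hd : α d = none)
    (hi : ∀ a : Fin n, α a ≠ some i)
    (σ : Equiv.Perm (Fin n))
    (hσ : ∀ a b : Fin n, α a = some b → σ a = b) :
    Equiv.Perm.sign σ = 1 ↔ (d : ℕ) % 2 = (i : ℕ) % 2 := by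
  classical
  obtain ⟨m, rfl⟩ : ∃ m, n = m + 1 := ⟨n - 1, by omega⟩
  have hnpar : (m + 1) % 2 = 0 := Nat.even_iff.mp hne
  obtain ⟨m', rfl⟩ : ∃ m', m = m' + 1 := ⟨m - 1, by omega⟩
  -- domain facts
  have hcard : (Finset.univ.filter fun a : Fin (m' + 1 + 1) => (α a).isSome).card = m' + 1 := by
    have h := hdom
    rw [Nat.card_eq_fintype_card, Fintype.card_subtype] at h
    omega
  have hsome : ∀ x : Fin (m' + 1 + 1), x ≠ d → (α x).isSome := by
    have hsub : (Finset.univ.filter fun a : Fin (m' + 1 + 1) => (α a).isSome) ⊆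
        Finset.univ.erase d := by
      intro a ha
      rw [Finset.mem_filter] at ha
      refine Finset.mem_erase.mpr ⟨?_, Finset.mem_univ _⟩
      rintro rfl
      rw [hd] at ha
      simp at ha
    have her : (Finset.univ.erase d).card = m' + 1 := by
      rw [Finset.card_erase_of_mem (Finset.mem_univ _), Finset.card_univ, Fintype.card_fin]
      omega
    have heq := Finset.eq_of_subset_of_card_le hsub (by omega)
    intro x hx
    have hx2 : x ∈ Finset.univ.erase d := Finset.mem_erase.mpr ⟨hx, Finset.mem_univ _⟩
    rw [← heq, Finset.mem_filter] at hx2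
    exact hx2.2
  have hval : ∀ x : Fin (m' + 1 + 1), x ≠ d → α x = some (σ x) := by
    intro x hx
    obtain ⟨b, hb⟩ := Option.isSome_iff_exists.mp (hsome x hx)
    rw [hb, hσ x b hb]
  have hσd : σ d = i := by
    by_contra h
    have ha : σ (σ.symm i) = i := σ.apply_symm_apply i
    have had : σ.symm i ≠ d := by
      intro hh; rw [hh] at ha; exact h ha
    exact hi _ (by rw [hval _ had, ha])
  have hσne : ∀ x : Fin (m' + 1 + 1), x ≠ d → σ x ≠ i := fun x hx h =>
    hx (σ.injective (h.trans hσd.symm))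
  -- the induced map on Fin (m'+1)
  have hβex : ∀ j : Fin (m' + 1), ∃ t, i.succAbove t = σ (d.succAbove j) :=
    fun j => Fin.exists_succAbove_eq (hσne _ (Fin.succAbove_ne d j))
  choose β hβ using hβex
  have hβinj : Function.Injective β := by
    intro a b h
    have h2 : σ (d.succAbove a) = σ (d.succAbove b) := by rw [← hβ, ← hβ, h]
    exact Fin.succAbove_right_injective (σ.injective h2)
  -- at most one cyclic descent
  have hmem : ∀ j : Fin (m' + 1), β (j + 1) < β j →
      (α (d.succAbove j)).isSome ∧ (α (d.succAbove (j + 1))).isSome ∧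
      ((d.succAbove j < d.succAbove (j + 1) ∧
          ∀ c : Fin (m' + 1 + 1), (α c).isSome →
            (c ≤ d.succAbove j ∨ d.succAbove (j + 1) ≤ c)) ∨
       (d.succAbove (j + 1) ≤ d.succAbove j ∧
          ∀ c : Fin (m' + 1 + 1), (α c).isSome →
            (d.succAbove (j + 1) ≤ c ∧ c ≤ d.succAbove j))) ∧
      ∃ x y : Fin (m' + 1 + 1), α (d.succAbove j) = some x ∧
        α (d.succAbove (j + 1)) = some y ∧ y < x := by
    intro j hj
    refine ⟨?_, ?_, ?_, ?_⟩
    · rw [hval _ (Fin.succAbove_ne d j)]; rfl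
    · rw [hval _ (Fin.succAbove_ne d (j + 1))]; rfl
    · by_cases hcase : (j : ℕ) + 1 < m' + 1
      · have hjlt : j < Fin.last m' := by
          rw [Fin.lt_def, Fin.val_last]; omega
        have hv1 : ((j + 1 : Fin (m' + 1)) : ℕ) = (j : ℕ) + 1 :=
          Fin.val_add_one_of_lt hjlt
        have hlt : j < j + 1 := by
          rw [Fin.lt_def, hv1]; omega
        left
        refine ⟨Fin.strictMono_succAbove d hlt, ?_⟩
        intro c hc
        have hcd : c ≠ d := by
          rintro rfl; rw [hd] at hc; simp at hc
        obtain ⟨t, rfl⟩ := Fin.exists_succAbove_eq hcd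
        have : t ≤ j ∨ j + 1 ≤ t := by
          rw [Fin.le_def, Fin.le_def, hv1]
          omega
        rcases this with h | h
        · exact Or.inl ((Fin.strictMono_succAbove d).monotone h)
        · exact Or.inr ((Fin.strictMono_succAbove d).monotone h)
      · have hjlast : j = Fin.last m' := by
          apply Fin.ext; rw [Fin.val_last]
          have := j.isLt; omega
        rw [hjlast, Fin.last_add_one]
        right
        refine ⟨(Fin.strictMono_succAbove d).monotone (Fin.zero_le _), ?_⟩
        intro c hc
        have hcd : c ≠ d := by
          rintro rfl; rw [hd] at hc; simp at hc
        obtain ⟨t, rfl⟩ := Fin.exists_succAbove_eq hcd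
        exact ⟨(Fin.strictMono_succAbove d).monotone (Fin.zero_le t),
          (Fin.strictMono_succAbove d).monotone (Fin.le_last t)⟩
    · refine ⟨σ (d.succAbove j), σ (d.succAbove (j + 1)), hval _ (Fin.succAbove_ne d j),
        hval _ (Fin.succAbove_ne d (j + 1)), ?_⟩
      rw [← hβ j, ← hβ (j + 1)]
      exact Fin.strictMono_succAbove i hj
  have hdesc : ∀ j1 j2 : Fin (m' + 1), β (j1 + 1) < β j1 → β (j2 + 1) < β j2 → j1 = j2 := by
    intro j1 j2 h1 h2
    by_contra hne12
    have key : 2 ≤ Nat.card {p : Fin (m' + 1 + 1) × Fin (m' + 1 + 1) //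
        (α p.1).isSome ∧ (α p.2).isSome ∧
        ((p.1 < p.2 ∧ ∀ c : Fin (m' + 1 + 1), (α c).isSome → (c ≤ p.1 ∨ p.2 ≤ c)) ∨
         (p.2 ≤ p.1 ∧ ∀ c : Fin (m' + 1 + 1), (α c).isSome → (p.2 ≤ c ∧ c ≤ p.1))) ∧
        ∃ x y : Fin (m' + 1 + 1), α p.1 = some x ∧ α p.2 = some y ∧ y < x} := by
      have hb : Nat.card Bool = 2 := by
        rw [Nat.card_eq_fintype_card, Fintype.card_bool]
      rw [← hb]
      have hm1 := hmem j1 h1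
      have hm2 := hmem j2 h2
      apply Nat.card_le_card_of_injective
        (fun b : Bool => if b then ⟨(d.succAbove j1, d.succAbove (j1 + 1)), hm1⟩
          else ⟨(d.succAbove j2, d.succAbove (j2 + 1)), hm2⟩)
      intro a b hab
      cases a <;> cases b <;> simp only [if_true, if_false] at hab <;> try rfl
      · exfalso
        have := congrArg (fun x => x.val.1) hab
        exact hne12 (Fin.succAbove_right_injective this).symm
      · exfalso
        have := congrArg (fun x => x.val.1) hab
        exact hne12 (Fin.succAbove_right_injective this)
    have hle : (2 : ℕ) ≤ 1 := le_trans key hOP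
    omega
  obtain ⟨j0, hall⟩ : ∃ j0 : Fin (m' + 1), ∀ j, β (j + 1) < β j → j = j0 := by
    by_cases hex : ∃ j : Fin (m' + 1), β (j + 1) < β j
    · obtain ⟨j0, hj0⟩ := hex
      exact ⟨j0, fun j hj => hdesc j j0 hj hj0⟩
    · push_neg at hex
      exact ⟨0, fun j hj => absurd hj (not_lt.mpr (hex j))⟩
  have hrot := rotationAux hβinj j0 hall
  set k : Fin (m' + 1) := 0 - (j0 + 1) with hk
  have hβk : ∀ j : Fin (m' + 1), β j = j + k := by
    intro j
    have h1 : j0 + 1 + (j - (j0 + 1)) = j := by abel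
    calc β j = β (j0 + 1 + (j - (j0 + 1))) := by rw [h1]
      _ = j - (j0 + 1) := hrot _
      _ = j + k := by rw [hk]; abel
  -- decomposition of σ
  have hcomp : σ * fperm d = fperm i * ((Fin.castSucc (Fin.last m')).cycleRange) ^ ((k : ℕ)) := by
    ext x
    rw [Equiv.Perm.mul_apply, Equiv.Perm.mul_apply]
    induction x using Fin.lastCases with
    | last => rw [fperm_last, cyc_pow_last, fperm_last, hσd]
    | cast j =>
      rw [fperm_castSucc, cyc_pow_castSucc, fperm_castSucc, ← hβ j, hβk j,
        Fin.cast_val_eq_self]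
  have hσeq : σ = fperm i * ((Fin.castSucc (Fin.last m')).cycleRange) ^ ((k : ℕ)) *
      (fperm d)⁻¹ := by
    rw [← hcomp, mul_inv_cancel_right]
  have hsc : Equiv.Perm.sign ((Fin.castSucc (Fin.last m')).cycleRange :
      Equiv.Perm (Fin (m' + 1 + 1))) = 1 := by
    rw [Fin.sign_cycleRange]
    have hcv : ((Fin.castSucc (Fin.last m') : Fin (m' + 1 + 1)) : ℕ) = m' := by simp
    rw [hcv]
    exact Even.neg_one_pow (Nat.even_iff.mpr (by omega))
  have hsign : Equiv.Perm.sign σ = (-1 : ℤˣ) ^ (((i.rev : ℕ)) + ((d.rev : ℕ))) := by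
    rw [hσeq, map_mul, map_mul, map_pow, Equiv.Perm.sign_inv, sign_fperm, sign_fperm, hsc,
      one_pow, mul_one, pow_add]
  rw [hsign, neg_one_pow_eq_one_iff_even (by decide), Nat.even_iff]
  have hiv : (i.rev : ℕ) = m' + 2 - ((i : ℕ) + 1) := Fin.val_rev i
  have hdv : (d.rev : ℕ) = m' + 2 - ((d : ℕ) + 1) := Fin.val_rev d
  have hile : (i : ℕ) < m' + 2 := i.isLt
  have hdle : (d : ℕ) < m' + 2 := d.isLt
  omega
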